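/- Let P > 0 and let λ, k, γ, ν, Ĉ, D̂ be real numbers with γ ≠ 0 and λk² ≠ 0. Suppose u : ℝ → ℝ is twice continuously differentiable, periodic with period 2P, and satisfies for all θ ∈ ℝ both λk²u''(θ) = (γ/3)u(θ)³ − (ν/2)u(θ)² + Ĉ and (λk²/2)u'(θ)² = (γ/12)u(θ)⁴ − (ν/6)u(θ)³ + Ĉu(θ) + D̂. Let α₁ = ⟨u⟩ and α₂ = ⟨u²⟩. Then ⟨u²(u')²⟩ = (γ/(6λk²)) ( α₂(69Ĉν/(10γ²) − 7ν⁴/(8γ⁴) + 24D̂/(5γ)) + α₁(6νD̂/(5γ²) + 21ν²Ĉ/(10γ³)) + 35ν³Ĉ/(20γ⁴) + 7ν²D̂/(5γ³) − 54Ĉ²/(5γ²) ), where ⟨f⟩ = (1/(2P))∫₀^{2P} f(θ)dθ. -/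

import Mathlib

set_option maxHeartbeats 1600000 in
/-- Evaluation of `⟨u²(u')²⟩` (the integral `Ĩ₃`) in terms of `α₁ = ⟨u⟩`,
`α₂ = ⟨u²⟩` and the integration constants of the steady Gardner equation. -/
theorem moment_I3
    (P lam k γ ν C D : ℝ) (hP : 0 < P) (hγ : γ ≠ 0) (hlk : lam * k ^ 2 ≠ 0)
    (u : ℝ → ℝ) (hu : ContDiff ℝ 2 u)
    (hper : Function.Periodic u (2 * P))
    (heq1 : ∀ θ : ℝ, lam * k ^ 2 * iteratedDeriv 2 u θ
      = (γ / 3) * (u θ) ^ 3 - (ν / 2) * (u θ) ^ 2 + C)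
    (heq2 : ∀ θ : ℝ, (lam * k ^ 2 / 2) * (deriv u θ) ^ 2
      = (γ / 12) * (u θ) ^ 4 - (ν / 6) * (u θ) ^ 3 + C * u θ + D)
    (α₁ α₂ : ℝ)
    (hα₁ : α₁ = (1 / (2 * P)) * ∫ θ in (0:ℝ)..(2 * P), u θ)
    (hα₂ : α₂ = (1 / (2 * P)) * ∫ θ in (0:ℝ)..(2 * P), (u θ) ^ 2) :
    (1 / (2 * P)) * ∫ θ in (0:ℝ)..(2 * P), (u θ) ^ 2 * (deriv u θ) ^ 2
      = (γ / (6 * lam * k ^ 2)) *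
          (α₂ * (69 * C * ν / (10 * γ ^ 2) - 7 * ν ^ 4 / (8 * γ ^ 4)
                  + 24 * D / (5 * γ))
           + α₁ * (6 * ν * D / (5 * γ ^ 2) + 21 * ν ^ 2 * C / (10 * γ ^ 3))
           + 35 * ν ^ 3 * C / (20 * γ ^ 4) + 7 * ν ^ 2 * D / (5 * γ ^ 3)
           - 54 * C ^ 2 / (5 * γ ^ 2)) := by

  -- regularity
  have hcd : ContDiff ℝ (1+1) u := by norm_num; exact hu
  have h1 := contDiff_succ_iff_deriv.mp hcd
  have h2 := contDiff_succ_iff_deriv.mp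
    (show ContDiff ℝ (0+1) (deriv u) by norm_num; exact h1.2.2)
  have hud : Differentiable ℝ u := h1.1
  have hdud : Differentiable ℝ (deriv u) := h2.1
  have hcu : Continuous u := hud.continuous
  have hcdu : Continuous (deriv u) := hdud.continuous
  have hcddu : Continuous (deriv (deriv u)) := h2.2.2.continuous
  have hit2 : iteratedDeriv 2 u = deriv (deriv u) := by
    rw [iteratedDeriv_succ, iteratedDeriv_one]
  have hperd : deriv u (2 * P) = deriv u 0 := by
    have : deriv (fun x => u (x + 2 * P)) 0 = deriv u (0 + 2 * P) :=
      deriv_comp_add_const ..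
    simp only [zero_add] at this
    rw [← this]
    congr 1
    funext x; exact hper x
  have hpu : u (2 * P) = u 0 := by simpa using hper 0
  have hint : ∀ m : ℕ, IntervalIntegrable (fun θ => u θ ^ m)
      MeasureTheory.volume 0 (2 * P) :=
    fun m => (hcu.pow m).intervalIntegrable _ _
  have split : ∀ (a b c d : ℝ) (m1 m2 m3 m4 : ℕ),
      (∫ θ in (0:ℝ)..(2 * P),
          (a * u θ ^ m1 + b * u θ ^ m2 + c * u θ ^ m3 + d * u θ ^ m4))
        = a * (∫ θ in (0:ℝ)..(2 * P), u θ ^ m1)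
          + b * (∫ θ in (0:ℝ)..(2 * P), u θ ^ m2)
          + c * (∫ θ in (0:ℝ)..(2 * P), u θ ^ m3)
          + d * (∫ θ in (0:ℝ)..(2 * P), u θ ^ m4) := by
    intro a b c d m1 m2 m3 m4
    have ha := (hint m1).const_mul a
    have hb := (hint m2).const_mul b
    have hc := (hint m3).const_mul c
    have hd := (hint m4).const_mul d
    rw [intervalIntegral.integral_add ((ha.add hb).add hc) hd,
      intervalIntegral.integral_add (ha.add hb) hc,
      intervalIntegral.integral_add ha hb,
      intervalIntegral.integral_const_mul, intervalIntegral.integral_const_mul,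
      intervalIntegral.integral_const_mul, intervalIntegral.integral_const_mul]
  have key : ∀ n : ℕ, (∫ θ in (0:ℝ)..(2 * P),
      (((n:ℝ)+1) * u θ ^ n * (deriv u θ) ^ 2 + u θ ^ (n+1) * iteratedDeriv 2 u θ)) = 0 := by
    intro n
    have hderiv : ∀ θ ∈ Set.uIcc (0:ℝ) (2 * P),
        HasDerivAt (fun θ => u θ ^ (n+1) * deriv u θ)
          (((n:ℝ)+1) * u θ ^ n * (deriv u θ) ^ 2 + u θ ^ (n+1) * iteratedDeriv 2 u θ) θ := by
      intro θ _
      have hd1 : HasDerivAt u (deriv u θ) θ := (hud θ).hasDerivAt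
      have hd2 : HasDerivAt (deriv u) (iteratedDeriv 2 u θ) θ := by
        rw [hit2]; exact (hdud θ).hasDerivAt
      have := (hd1.fun_pow (n+1)).fun_mul hd2
      refine this.congr_deriv ?_
      push_cast [Nat.add_sub_cancel]
      ring
    have hi : IntervalIntegrable (fun θ =>
        ((n:ℝ)+1) * u θ ^ n * (deriv u θ) ^ 2 + u θ ^ (n+1) * iteratedDeriv 2 u θ)
        MeasureTheory.volume 0 (2 * P) := by
      apply Continuous.intervalIntegrable
      exact ((continuous_const.mul (hcu.pow n)).mul (hcdu.pow 2)).add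
        ((hcu.pow (n+1)).mul (hit2 ▸ hcddu))
    rw [intervalIntegral.integral_eq_sub_of_hasDerivAt hderiv hi, hpu, hperd, sub_self]
  have keyA : (∫ θ in (0:ℝ)..(2 * P), iteratedDeriv 2 u θ) = 0 := by
    have hderiv : ∀ θ ∈ Set.uIcc (0:ℝ) (2 * P),
        HasDerivAt (deriv u) (iteratedDeriv 2 u θ) θ := by
      intro θ _; rw [hit2]; exact (hdud θ).hasDerivAt
    have hi : IntervalIntegrable (fun θ => iteratedDeriv 2 u θ)
        MeasureTheory.volume 0 (2 * P) :=
      (hit2 ▸ hcddu).intervalIntegrable _ _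
    rw [intervalIntegral.integral_eq_sub_of_hasDerivAt hderiv hi, hperd, sub_self]
  have hJ0 : (∫ θ in (0:ℝ)..(2 * P), u θ ^ 0) = 2 * P := by simp
  have hJ1 : (∫ θ in (0:ℝ)..(2 * P), u θ ^ 1) = ∫ θ in (0:ℝ)..(2 * P), u θ := by
    simp
  have EA : (0:ℝ) = (γ/3) * (∫ θ in (0:ℝ)..(2*P), u θ ^ 3)
      + (-(ν/2)) * (∫ θ in (0:ℝ)..(2*P), u θ ^ 2)
      + C * (∫ θ in (0:ℝ)..(2*P), u θ ^ 0)
      + 0 * (∫ θ in (0:ℝ)..(2*P), u θ ^ 0) := by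
    rw [← split]
    calc (0:ℝ) = (lam*k^2) * ∫ θ in (0:ℝ)..(2*P), iteratedDeriv 2 u θ := by
          rw [keyA]; ring
      _ = ∫ θ in (0:ℝ)..(2*P), (lam*k^2) * iteratedDeriv 2 u θ := by
          rw [intervalIntegral.integral_const_mul]
      _ = _ := by
          apply intervalIntegral.integral_congr
          intro θ _
          beta_reduce
          linear_combination heq1 θ
  have Egen : ∀ n : ℕ, (0:ℝ) =
      (((n:ℝ)+1)*(γ/6) + γ/3) * (∫ θ in (0:ℝ)..(2*P), u θ ^ (n+4))
      + (-( ((n:ℝ)+1)*(ν/3) + ν/2)) * (∫ θ in (0:ℝ)..(2*P), u θ ^ (n+3))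
      + ((2*((n:ℝ)+1)+1)*C) * (∫ θ in (0:ℝ)..(2*P), u θ ^ (n+1))
      + (2*((n:ℝ)+1)*D) * (∫ θ in (0:ℝ)..(2*P), u θ ^ n) := by
    intro n
    rw [← split]
    calc (0:ℝ) = (lam*k^2) * ∫ θ in (0:ℝ)..(2*P),
          (((n:ℝ)+1) * u θ ^ n * (deriv u θ) ^ 2 + u θ ^ (n+1) * iteratedDeriv 2 u θ) := by
          rw [key n]; ring
      _ = ∫ θ in (0:ℝ)..(2*P), (lam*k^2) *
          (((n:ℝ)+1) * u θ ^ n * (deriv u θ) ^ 2 + u θ ^ (n+1) * iteratedDeriv 2 u θ) := by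
          rw [intervalIntegral.integral_const_mul]
      _ = _ := by
          apply intervalIntegral.integral_congr
          intro θ _
          beta_reduce
          linear_combination (2*((n:ℝ)+1) * u θ ^ n) * heq2 θ + (u θ ^ n * u θ) * heq1 θ
  have EK : (lam*k^2) * (∫ θ in (0:ℝ)..(2*P), (u θ) ^ 2 * (deriv u θ)^2)
      = (γ/6) * (∫ θ in (0:ℝ)..(2*P), u θ ^ 6)
        + (-(ν/3)) * (∫ θ in (0:ℝ)..(2*P), u θ ^ 5)
        + (2*C) * (∫ θ in (0:ℝ)..(2*P), u θ ^ 3)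
        + (2*D) * (∫ θ in (0:ℝ)..(2*P), u θ ^ 2) := by
    rw [← split, ← intervalIntegral.integral_const_mul]
    apply intervalIntegral.integral_congr
    intro θ _
    beta_reduce
    linear_combination (2 * u θ ^ 2) * heq2 θ
  have E0 := Egen 0
  have E1 := Egen 1
  have E2 := Egen 2
  norm_num [hJ0, hJ1] at EA E0 E1 E2
  rw [hα₁, hα₂]
  set J1 := ∫ θ in (0:ℝ)..(2*P), u θ with hJ1d
  set J2 := ∫ θ in (0:ℝ)..(2*P), (u θ) ^ 2 with hJ2d
  set J3 := ∫ θ in (0:ℝ)..(2*P), u θ ^ 3 with hJ3d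
  set J4 := ∫ θ in (0:ℝ)..(2*P), u θ ^ 4 with hJ4d
  set J5 := ∫ θ in (0:ℝ)..(2*P), u θ ^ 5 with hJ5d
  set J6 := ∫ θ in (0:ℝ)..(2*P), u θ ^ 6 with hJ6d
  set K := ∫ θ in (0:ℝ)..(2*P), (u θ) ^ 2 * (deriv u θ)^2 with hKd
  have hPne : P ≠ 0 := ne_of_gt hP
  have v3 : J3 = (3*ν*J2 - 12*C*P)/(2*γ) := by
    field_simp
    linear_combination (-6)*EA
  have v4 : J4 = (5*ν*J3 - 18*C*J1 - 24*D*P)/(3*γ) := by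
    field_simp
    linear_combination (-6)*E0
  have v5 : J5 = (7*ν*J4 - 30*C*J2 - 24*D*J1)/(4*γ) := by
    field_simp
    linear_combination (-6)*E1
  have v6 : J6 = (9*ν*J5 - 42*C*J3 - 36*D*J2)/(5*γ) := by
    field_simp
    linear_combination (-6)*E2
  have vK : K = ((γ/6)*J6 - (ν/3)*J5 + 2*C*J3 + 2*D*J2)/(lam*k^2) := by
    rw [eq_div_iff hlk]
    linear_combination EK
  rw [show (6 * lam * k ^ 2 : ℝ) = 6 * (lam * k ^ 2) by ring]
  set μ := lam * k ^ 2 with hμd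
  rw [vK, v6, v5, v4, v3]
  field_simp
  ring
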